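/- Let $\Omega = \{(x', t) : x' \in \mathbb{R}^{n-1}, t > \psi(x')\}$ be a Lipschitz graph domain, where $\psi : \mathbb{R}^{n-1} \to \mathbb{R}$ is Lipschitz. For each cube $Q \subset \mathbb{R}^{n-1}$ with side length $\ell(Q)$, define $W(Q) = \{(x', t) : x' \in Q, \psi(x') + 4\ell(Q) < t < \psi(x') + 8\ell(Q)\}$. Let $\mathcal{H}_j$ be the collection of open dyadic cubes in $\mathbb{R}^{n-1}$ of side length $2^j$ with vertices at integer multiples of $2^j$, and $\mathcal{H} = \bigcup_{j \in \mathbb{Z}} \mathcal{H}_j$. Then: (a) if $Q, R \in \mathcal{H}$ with $Q \neq R$, then $W(Q) \cap W(R) = \emptyset$; and (b) $\Omega = \bigcup_{Q \in \mathcal{H}} \overline{W(Q)}$. -/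

import Mathlib

/-- The open dyadic cube of generation `j` indexed by `m ∈ ℤ^n`. -/
def dyCube (n : ℕ) (j : ℤ) (m : Fin n → ℤ) : Set (EuclideanSpace ℝ (Fin n)) :=
  {y | ∀ i, (m i : ℝ) * 2 ^ j < y i ∧ y i < ((m i : ℝ) + 1) * 2 ^ j}

/-- The Whitney-type region `W(Q) = {(x',t) : x' ∈ Q, ψ(x') + 4ℓ(Q) < t < ψ(x') + 8ℓ(Q)}`
over the dyadic cube `Q` of side length `2^j`. -/
def Wreg {n : ℕ} (ψ : EuclideanSpace ℝ (Fin n) → ℝ) (j : ℤ) (m : Fin n → ℤ) :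
    Set (EuclideanSpace ℝ (Fin n) × ℝ) :=
  {p | p.1 ∈ dyCube n j m ∧ ψ p.1 + 4 * 2 ^ j < p.2 ∧ p.2 < ψ p.1 + 8 * 2 ^ j}

/-- In a Lipschitz graph domain, the regions `W(Q)` over distinct dyadic cubes are pairwise
disjoint, and the closures of the `W(Q)` cover the domain. -/
theorem stmt_8 (n : ℕ) (K : NNReal) (ψ : EuclideanSpace ℝ (Fin (n - 1)) → ℝ)
    (hψ : LipschitzWith K ψ) :
    (∀ (j j' : ℤ) (m m' : Fin (n - 1) → ℤ), (j, m) ≠ (j', m') →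
        Disjoint (Wreg ψ j m) (Wreg ψ j' m')) ∧
      {p : EuclideanSpace ℝ (Fin (n - 1)) × ℝ | ψ p.1 < p.2}
        = ⋃ (j : ℤ), ⋃ (m : Fin (n - 1) → ℤ), closure (Wreg ψ j m) := by
  have hc : Continuous ψ := hψ.continuous
  have h2pos : ∀ j : ℤ, (0:ℝ) < 2 ^ j := fun j => zpow_pos (by norm_num) j
  constructor
  · -- disjointness
    have key : ∀ (a b : ℤ) (ma mb : Fin (n-1) → ℤ), a < b →
        Disjoint (Wreg ψ a ma) (Wreg ψ b mb) := by
      intro a b ma mb hab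
      rw [Set.disjoint_left]
      rintro ⟨x, t⟩ ⟨_, _, h2⟩ ⟨_, h1', _⟩
      have h1 : (2:ℝ) ^ (a+1) ≤ 2 ^ b := by
        apply zpow_le_zpow_right₀ one_le_two (by omega)
      have h2' : (8:ℝ) * 2 ^ a ≤ 4 * 2 ^ b := by
        rw [zpow_add_one₀ (two_ne_zero)] at h1; nlinarith [h2pos a]
      simp only at h2 h1'
      linarith
    intro j j' m m' hne
    rcases lt_trichotomy j j' with h | rfl | h
    · exact key j j' m m' h
    · have hmm : m ≠ m' := by simpa using hne
      obtain ⟨i, hi⟩ := Function.ne_iff.mp hmm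
      rw [Set.disjoint_left]
      rintro ⟨x, t⟩ ⟨hm, _, _⟩ ⟨hm', _, _⟩
      have k : ∀ (p q : ℤ), p < q → ((p:ℝ)+1)*2^j ≤ q * 2^j := by
        intro p q hpq
        have : (p:ℝ) + 1 ≤ q := by exact_mod_cast hpq
        nlinarith [h2pos j]
      rcases lt_or_gt_of_ne hi with h | h
      · linarith [(hm i).2, (hm' i).1, k _ _ h]
      · linarith [(hm' i).2, (hm i).1, k _ _ h]
    · exact (key j' j m' m h).symm
  · -- covering
    ext ⟨x, t⟩
    simp only [Set.mem_setOf_eq, Set.mem_iUnion]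
    constructor
    · intro ht
      set δ := t - ψ x with hδ
      have hδpos : 0 < δ := by simp only [hδ]; linarith
      obtain ⟨j, hj1, hj2⟩ := exists_mem_Ico_zpow (by positivity : (0:ℝ) < δ/8) one_lt_two
      set J := j + 1 with hJ
      have h4 : 4 * 2 ^ J ≤ δ := by
        rw [hJ, zpow_add_one₀ (two_ne_zero)]; linarith
      have h8 : δ < 8 * 2 ^ J := by rw [hJ]; linarith
      set m : Fin (n-1) → ℤ := fun i => ⌊x i / 2^J⌋ with hm
      have hxm : ∀ i, (m i : ℝ) * 2^J ≤ x i ∧ x i < ((m i : ℝ)+1) * 2^J := by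
        intro i
        constructor
        · have := Int.floor_le (x i / 2^J)
          calc (m i : ℝ) * 2^J ≤ (x i / 2^J) * 2^J := by
                apply mul_le_mul_of_nonneg_right this (le_of_lt (h2pos J))
            _ = x i := by field_simp
        · have := Int.lt_floor_add_one (x i / 2^J)
          calc x i = (x i / 2^J) * 2^J := by field_simp
            _ < ((m i : ℝ)+1) * 2^J := by
                apply mul_lt_mul_of_pos_right this (h2pos J)
      refine ⟨J, m, ?_⟩
      -- approximate from inside
      set u : EuclideanSpace ℝ (Fin (n-1)) := WithLp.toLp 2 (fun _ => (1:ℝ)) with hu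
      set g : ℝ → EuclideanSpace ℝ (Fin (n-1)) × ℝ :=
        fun ε => (x + ε • u, ψ (x + ε • u) + δ + ε) with hg
      have hgc : Continuous g := by
        apply Continuous.prodMk
        · exact continuous_const.add (continuous_id.smul continuous_const)
        · exact ((hc.comp (continuous_const.add
            (continuous_id.smul continuous_const))).add continuous_const).add continuous_id
      have hg0 : g 0 = (x, t) := by
        simp only [hg, zero_smul, add_zero, hδ]
        rw [Prod.mk.injEq]
        exact ⟨rfl, by ring⟩
      have htend : Filter.Tendsto g (nhdsWithin 0 (Set.Ioi 0)) (nhds (x, t)) := by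
        have := hgc.tendsto 0
        rw [hg0] at this
        exact this.mono_left nhdsWithin_le_nhds
      have hcoord : ∀ ε : ℝ, ∀ i, (x + ε • u) i = x i + ε := by
        intro ε i
        simp [hu, PiLp.add_apply, PiLp.smul_apply]
      have hev : ∀ᶠ ε in nhdsWithin 0 (Set.Ioi 0), g ε ∈ Wreg ψ J m := by
        have hmem : ∀ᶠ ε in nhdsWithin 0 (Set.Ioi 0), ε ∈ Set.Ioi (0:ℝ) :=
          eventually_mem_nhdsWithin
        have hup : ∀ᶠ ε in nhdsWithin 0 (Set.Ioi 0), ∀ i, x i + ε < ((m i : ℝ)+1) * 2^J := by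
          rw [Filter.eventually_all]
          intro i
          have : Filter.Tendsto (fun ε : ℝ => x i + ε) (nhdsWithin 0 (Set.Ioi 0))
              (nhds (x i)) := by
            have : Filter.Tendsto (fun ε : ℝ => x i + ε) (nhds 0) (nhds (x i + 0)) :=
              (continuous_const.add continuous_id).tendsto 0
            rw [add_zero] at this
            exact this.mono_left nhdsWithin_le_nhds
          exact this.eventually_lt_const (hxm i).2
        have hδup : ∀ᶠ ε in nhdsWithin 0 (Set.Ioi 0), δ + ε < 8 * 2^J := by
          have : Filter.Tendsto (fun ε : ℝ => δ + ε) (nhdsWithin 0 (Set.Ioi 0))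
              (nhds δ) := by
            have : Filter.Tendsto (fun ε : ℝ => δ + ε) (nhds 0) (nhds (δ + 0)) :=
              (continuous_const.add continuous_id).tendsto 0
            rw [add_zero] at this
            exact this.mono_left nhdsWithin_le_nhds
          exact this.eventually_lt_const h8
        filter_upwards [hmem, hup, hδup] with ε hε hup hδup
        have hεpos : 0 < ε := hε
        simp only [hg, Wreg, dyCube, Set.mem_setOf_eq]
        refine ⟨fun i => ?_, ?_, ?_⟩
        · rw [hcoord ε i]
          exact ⟨lt_of_le_of_lt (hxm i).1 (by linarith), hup i⟩
        · linarith
        · linarith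
      exact mem_closure_of_tendsto htend hev
    · rintro ⟨j, m, hp⟩
      have hsub : closure (Wreg ψ j m) ⊆ {p : EuclideanSpace ℝ (Fin (n-1)) × ℝ |
          ψ p.1 + 4 * 2^j ≤ p.2} := by
        apply closure_minimal
        · exact fun p hp => le_of_lt hp.2.1
        · exact isClosed_le (((hc.comp continuous_fst).add continuous_const)) continuous_snd
      have := hsub hp
      simp only [Set.mem_setOf_eq] at this
      linarith [h2pos j]
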